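/- Let φ : [0,∞) → [0,∞) be concave with φ(1) = 1, differentiable on (0,1) with nonnegative derivative there. Then for all x ≥ 0, exp(-φ(x)) + φ(1 - exp(-x)) ≥ 1. -/

import Mathlib

theorem exp_phi_inequality (φ φ' : ℝ → ℝ)
    (hconc : ∀ a b l : ℝ, 0 ≤ a → 0 ≤ b → 0 ≤ l → l ≤ 1 →
      l * φ a + (1 - l) * φ b ≤ φ (l * a + (1 - l) * b))
    (hnn : ∀ x : ℝ, 0 ≤ x → 0 ≤ φ x)
    (hφ1 : φ 1 = 1)
    (hderiv : ∀ x : ℝ, 0 < x → x < 1 → HasDerivAt φ (φ' x) x)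
    (hderiv_nonneg : ∀ x : ℝ, 0 < x → x < 1 → 0 ≤ φ' x) :
    ∀ x : ℝ, 0 ≤ x → 1 ≤ Real.exp (-φ x) + φ (1 - Real.exp (-x)) := by
  intro x hx
  rcases eq_or_lt_of_le hx with rfl | hx
  · -- x = 0 case
    simp only [neg_zero, Real.exp_zero, sub_self]
    have h1 : -φ 0 + 1 ≤ Real.exp (-φ 0) := Real.add_one_le_exp _
    linarith
  · set t : ℝ := 1 - Real.exp (-x) with ht
    have hex0 : 0 < Real.exp (-x) := Real.exp_pos _
    have hex1 : Real.exp (-x) < 1 := by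
      rw [Real.exp_lt_one_iff]; linarith
    have ht0 : 0 < t := by simp [ht]; linarith
    have ht1 : t < 1 := by simp [ht]; linarith
    have htx : t ≤ x := by
      have := Real.add_one_le_exp (-x)
      simp [ht]; linarith
    have hφ0 : 0 ≤ φ 0 := hnn 0 le_rfl
    -- t ≤ φ t
    have hA : t ≤ φ t := by
      have := hconc 1 0 t zero_le_one le_rfl ht0.le ht1.le
      rw [hφ1] at this
      have h2 : t * 1 + (1 - t) * 0 = t := by ring
      rw [h2] at this
      nlinarith
    -- φ x ≤ (x / t) * φ t
    have hkey : t * φ x ≤ x * φ t := by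
      have hl0 : 0 ≤ t / x := div_nonneg ht0.le hx.le
      have hl1 : t / x ≤ 1 := by
        rw [div_le_one hx]; exact htx
      have := hconc x 0 (t / x) hx.le le_rfl hl0 hl1
      have h2 : t / x * x + (1 - t / x) * 0 = t := by
        field_simp
        ring
      rw [h2] at this
      have h3 : t / x * φ x ≤ φ t := by nlinarith
      rw [div_mul_eq_mul_div, div_le_iff₀ hx] at h3
      nlinarith
    set c : ℝ := φ t / t with hc
    have hc1 : 1 ≤ c := by
      rw [hc, le_div_iff₀ ht0]; linarith
    have hφxc : φ x ≤ c * x := by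
      rw [hc, div_mul_eq_mul_div, le_div_iff₀ ht0]
      nlinarith
    -- Bernoulli: 1 + c * (-t) ≤ (1 + (-t)) ^ c
    have hbern : 1 - c * t ≤ (1 - t) ^ (c : ℝ) := by
      have := one_add_mul_self_le_rpow_one_add (s := -t) (by linarith) hc1
      have h2 : 1 + -t = 1 - t := by ring
      rw [h2] at this
      linarith [this]
    have hrw : (1 - t) ^ (c : ℝ) = Real.exp (-x * c) := by
      have : (1 : ℝ) - t = Real.exp (-x) := by simp [ht]
      rw [this, ← Real.exp_mul]
    have hexp : Real.exp (-x * c) ≤ Real.exp (-φ x) := by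
      apply Real.exp_le_exp.mpr
      nlinarith
    have hct : c * t = φ t := by
      rw [hc]; field_simp
    nlinarith [hbern, hrw.symm ▸ hbern]
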